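/- Assume e ≥ 2. Let U' be the 2×2 rational matrix [[b₁/m₁, b₁·r₁·λ_{1,1}], [b₂·r₂·λ_{2,1}, b₂/m₂]] and let M' = sw(U'). Then M'₁₂ = n₁·r₁, M'₂₁ = −n₂·r₂, M'₂₂ = m₁·m₂/d_•, all four entries of M' are integers, det M' = 1, and for every j = 1, …, e−1: λ'_{1,j}(1) = M'₁₁·λ'_{1,j}(2) + M'₁₂·λ'_{2,j}(2) and λ'_{2,j}(1) = M'₂₁·λ'_{1,j}(2) + M'₂₂·λ'_{2,j}(2). -/

import Mathlib

/-- The data of a reduced irreducible quasi-ordinary prototype surface branch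
`ζ = Σ_{j=1}^e x₁^{λ_{1,j}} x₂^{λ_{2,j}}` together with, for each choice `i ∈ {1,2}`
of the recursion, the derived exponent sequences `λ^{(k)}_{u,j}(i)`, the lowest-terms
representations `λ^{(k)}_{u,1}(i) = n_u^{(k)}(i) / m_u^{(k)}(i)` of the leading
exponents, and the minimal nonnegative integers `r_i^{(k)}, s_i^{(k)}` with
`m_ĩ^{(k)}(i)·s_i^{(k)} − n_ĩ^{(k)}(i)·r_i^{(k)} = 1`.

The `Bool` index `false` corresponds to the index `1` of the paper and `true` to `2`;
for an index `i`, the other index `ĩ` is `!i`. -/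
structure QOData where
  /-- the number `e ≥ 1` of characteristic terms -/
  e : ℕ
  he : 1 ≤ e
  /-- the characteristic exponents `λ_{u,j}` for `u ∈ {1,2}`, `j = 1,…,e` -/
  lam0 : Bool → ℕ → ℚ
  /-- the derived exponents `λ^{(k)}_{u,j}(i)`; the arguments are, in order, `i u k j`,
  with `k = 0,…,e−1` and `j = 1,…,e−k` -/
  lam : Bool → Bool → ℕ → ℕ → ℚ
  /-- the numerators `n_u^{(k)}(i)`; the arguments are, in order, `i u k` -/
  n : Bool → Bool → ℕ → ℤ
  /-- the denominators `m_u^{(k)}(i) ≥ 1`; the arguments are, in order, `i u k` -/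
  m : Bool → Bool → ℕ → ℕ
  /-- `r_i^{(k)}`; the arguments are, in order, `i k` -/
  r : Bool → ℕ → ℕ
  /-- `s_i^{(k)}`; the arguments are, in order, `i k` -/
  s : Bool → ℕ → ℕ
  /-- the leading exponents are positive -/
  pos : ∀ u, 0 < lam0 u 1
  /-- the exponents are nondecreasing in `j` -/
  mono : ∀ u j, 1 ≤ j → j < e → lam0 u j ≤ lam0 u (j + 1)
  /-- each characteristic pair is essential: it does not lie in the subgroup of `ℚ²`
  generated by `ℤ²` together with the earlier pairs -/
  essential : ∀ j, 1 ≤ j → j ≤ e →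
    (lam0 false j, lam0 true j) ∉
      AddSubgroup.closure
        ((Set.range fun p : ℤ × ℤ => ((p.1 : ℚ), (p.2 : ℚ))) ∪
          {q : ℚ × ℚ | ∃ l, 1 ≤ l ∧ l < j ∧ q = (lam0 false l, lam0 true l)})
  /-- `λ^{(0)}_{u,j}(i) = λ_{u,j}` -/
  base : ∀ i u j, lam i u 0 j = lam0 u j
  /-- the denominators are at least 1 -/
  m_pos : ∀ i u k, k ≤ e - 1 → 1 ≤ m i u k
  /-- the leading exponents are written in lowest terms -/
  cop : ∀ i u k, k ≤ e - 1 → Int.gcd (n i u k) (m i u k : ℤ) = 1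
  /-- `λ^{(k)}_{u,1}(i) = n_u^{(k)}(i) / m_u^{(k)}(i)` -/
  lead : ∀ i u k, k ≤ e - 1 → lam i u k 1 = (n i u k : ℚ) / (m i u k : ℚ)
  /-- `m_ĩ^{(k)}(i)·s_i^{(k)} − n_ĩ^{(k)}(i)·r_i^{(k)} = 1` -/
  rs_det : ∀ i k, k ≤ e - 1 →
    (m i (!i) k : ℤ) * (s i k : ℤ) - n i (!i) k * (r i k : ℤ) = 1
  /-- `r_i^{(k)}` and `s_i^{(k)}` are the smallest nonnegative integers satisfying
  the determinant condition -/
  rs_min : ∀ i k, k ≤ e - 1 → ∀ r' s' : ℕ,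
    (m i (!i) k : ℤ) * (s' : ℤ) - n i (!i) k * (r' : ℤ) = 1 → r i k ≤ r' ∧ s i k ≤ s'
  /-- the recursion for `λ^{(k+1)}_{ĩ,j}(i)`, where `d_•^{(k)}(i) = lcm(m₁^{(k)}(i), m₂^{(k)}(i))` -/
  rec_other : ∀ i k j, k + 1 ≤ e - 1 → 1 ≤ j → j ≤ e - (k + 1) →
    lam i (!i) (k + 1) j =
      (m i (!i) k : ℚ) *
        (lam i (!i) k (j + 1) - lam i (!i) k 1 +
          (Nat.lcm (m i false k) (m i true k) : ℚ) * lam i (!i) k 1)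
  /-- the recursion for `λ^{(k+1)}_{i,j}(i)`, where
  `b_i^{(k)} = d_•^{(k)}(i) / m_ĩ^{(k)}(i)` -/
  rec_self : ∀ i k j, k + 1 ≤ e - 1 → 1 ≤ j → j ≤ e - (k + 1) →
    lam i i (k + 1) j =
      ((Nat.lcm (m i false k) (m i true k) / m i (!i) k : ℕ) : ℚ) *
        (lam i i k (j + 1) - lam i i k 1 +
          (Nat.lcm (m i false k) (m i true k) : ℚ) * lam i i k 1) +
      ((Nat.lcm (m i false k) (m i true k) / m i (!i) k : ℕ) : ℚ) * (r i k : ℚ) *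
        lam i i k 1 * lam i (!i) (k + 1) j

namespace QOData

variable (D : QOData)

/-- `d_•^{(k)}(i) = lcm(m₁^{(k)}(i), m₂^{(k)}(i))` -/
def dd (i : Bool) (k : ℕ) : ℕ := Nat.lcm (D.m i false k) (D.m i true k)

/-- `b_i^{(k)} = d_•^{(k)}(i) / m_ĩ^{(k)}(i)` -/
def b (i : Bool) (k : ℕ) : ℕ := D.dd i k / D.m i (!i) k

/-- `c_•^{(k)}(i) = gcd(n₁^{(k)}(i), n₂^{(k)}(i))` -/
def c (i : Bool) (k : ℕ) : ℕ := Int.gcd (D.n i false k) (D.n i true k)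

/-- `d^{(k)}(i) = ∏_{l=k}^{e−1} d_•^{(l)}(i)`, the degree of the `k`-th derived surface -/
def dTot (i : Bool) (k : ℕ) : ℕ := ∏ l ∈ Finset.Ico k D.e, D.dd i l

end QOData

/-- For a 2×2 matrix `U` over `ℚ` with `U 1 1 ≠ 0` and determinant `Δ`,
`sw U = [[Δ/U₂₂, U₁₂/U₂₂], [−U₂₁/U₂₂, 1/U₂₂]]`. -/
def sw (U : Matrix (Fin 2) (Fin 2) ℚ) : Matrix (Fin 2) (Fin 2) ℚ :=
  !![U.det / U 1 1, U 0 1 / U 1 1; -(U 1 0) / U 1 1, 1 / U 1 1]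

/-- Properties of `M' = sw(U')` for
`U' = [[b₁/m₁, b₁·r₁·λ_{1,1}], [b₂·r₂·λ_{2,1}, b₂/m₂]]`: the explicit values of
`M'₁₂ = n₁·r₁`, `M'₂₁ = −n₂·r₂`, `M'₂₂ = m₁·m₂/d_•`, integrality of all four entries,
`det M' = 1`, and the relations `λ'_{1,j}(1) = M'₁₁·λ'_{1,j}(2) + M'₁₂·λ'_{2,j}(2)`,
`λ'_{2,j}(1) = M'₂₁·λ'_{1,j}(2) + M'₂₂·λ'_{2,j}(2)` for `j = 1,…,e−1`. -/
theorem Mprime_properties (D : QOData) (he2 : 2 ≤ D.e)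
    (U' : Matrix (Fin 2) (Fin 2) ℚ)
    (hU' : U' = !![(D.b false 0 : ℚ) / (D.m false false 0 : ℚ),
                     (D.b false 0 : ℚ) * (D.r false 0 : ℚ) * D.lam0 false 1;
                   (D.b true 0 : ℚ) * (D.r true 0 : ℚ) * D.lam0 true 1,
                     (D.b true 0 : ℚ) / (D.m true true 0 : ℚ)]) :
    sw U' 0 1 = (D.n false false 0 : ℚ) * (D.r false 0 : ℚ) ∧
    sw U' 1 0 = -((D.n true true 0 : ℚ) * (D.r true 0 : ℚ)) ∧
    sw U' 1 1 = (D.m false false 0 : ℚ) * (D.m true true 0 : ℚ) / (D.dd false 0 : ℚ) ∧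
    (∀ a b : Fin 2, ∃ z : ℤ, sw U' a b = (z : ℚ)) ∧
    (sw U').det = 1 ∧
    ∀ j, 1 ≤ j → j ≤ D.e - 1 →
      D.lam false false 1 j =
        sw U' 0 0 * D.lam true false 1 j + sw U' 0 1 * D.lam true true 1 j ∧
      D.lam false true 1 j =
        sw U' 1 0 * D.lam true false 1 j + sw U' 1 1 * D.lam true true 1 j := by
  have h0 : (0:ℕ) ≤ D.e - 1 := Nat.zero_le _
  -- the data at level 0 does not depend on i
  have key : ∀ i u, D.n i u 0 = D.n false u 0 ∧ D.m i u 0 = D.m false u 0 := by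
    intro i u
    have h1 := D.lead false u 0 h0
    have h2 := D.lead i u 0 h0
    rw [D.base false u 1] at h1
    rw [D.base i u 1] at h2
    have heq : (D.n i u 0 : ℚ) / ((D.m i u 0 : ℤ) : ℚ)
        = (D.n false u 0 : ℚ) / ((D.m false u 0 : ℤ) : ℚ) := by
      push_cast
      rw [← h1, ← h2]
    have hp1 : (0:ℤ) < (D.m i u 0 : ℤ) := by exact_mod_cast D.m_pos i u 0 h0
    have hp2 : (0:ℤ) < (D.m false u 0 : ℤ) := by exact_mod_cast D.m_pos false u 0 h0
    have hc1 : Nat.Coprime (D.n i u 0).natAbs ((D.m i u 0 : ℤ)).natAbs := by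
      have := D.cop i u 0 h0; rwa [Int.gcd] at this
    have hc2 : Nat.Coprime (D.n false u 0).natAbs ((D.m false u 0 : ℤ)).natAbs := by
      have := D.cop false u 0 h0; rwa [Int.gcd] at this
    have := Rat.div_int_inj hp1 hp2 hc1 hc2 heq
    exact ⟨this.1, by exact_mod_cast this.2⟩
  set m1 : ℕ := D.m false false 0 with hm1def
  set m2 : ℕ := D.m false true 0 with hm2def
  set n1 : ℤ := D.n false false 0 with hn1def
  set n2 : ℤ := D.n false true 0 with hn2def
  set r1 : ℕ := D.r false 0 with hr1def
  set s1 : ℕ := D.s false 0 with hs1def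
  set r2 : ℕ := D.r true 0 with hr2def
  set s2 : ℕ := D.s true 0 with hs2def
  set d : ℕ := D.dd false 0 with hddef
  set b1 : ℕ := D.b false 0 with hb1def
  set b2 : ℕ := D.b true 0 with hb2def
  have hmt : ∀ u, D.m true u 0 = D.m false u 0 := fun u => (key true u).2
  have hnt : ∀ u, D.n true u 0 = D.n false u 0 := fun u => (key true u).1
  have hd_eq : d = Nat.lcm m1 m2 := rfl
  have hddt : D.dd true 0 = d := by
    rw [QOData.dd, hmt, hmt, hd_eq]
  have hb1nat : b1 = d / m2 := rfl
  have hb2nat : b2 = d / m1 := by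
    rw [hb2def, QOData.b, hddt]
    simp only [Bool.not_true, hmt]
    rfl
  have hb1m : b1 * m2 = d := by
    rw [hb1nat]
    exact Nat.div_mul_cancel (Nat.dvd_lcm_right _ _)
  have hb2m : b2 * m1 = d := by
    rw [hb2nat, hd_eq]
    exact Nat.div_mul_cancel (Nat.dvd_lcm_left _ _)
  -- positivity
  have hm1q : (m1:ℚ) ≠ 0 := by
    have := D.m_pos false false 0 h0; positivity
  have hm2q : (m2:ℚ) ≠ 0 := by
    have := D.m_pos false true 0 h0; positivity
  have hdq : (d:ℚ) ≠ 0 := by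
    have h1 := D.m_pos false false 0 h0
    have h2 := D.m_pos false true 0 h0
    have : 0 < Nat.lcm m1 m2 := Nat.pos_of_ne_zero (Nat.lcm_ne_zero (by omega) (by omega))
    rw [hd_eq]; positivity
  have hb1mq : (b1:ℚ) * m2 = d := by exact_mod_cast congrArg (Nat.cast : ℕ → ℚ) hb1m
  have hb2mq : (b2:ℚ) * m1 = d := by exact_mod_cast congrArg (Nat.cast : ℕ → ℚ) hb2m
  have hb1e : (b1:ℚ) = (d:ℚ) / m2 := by field_simp [← hb1mq]; exact hb1mq
  have hb2e : (b2:ℚ) = (d:ℚ) / m1 := by field_simp [← hb2mq]; exact hb2mq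
  -- Bezout relations
  have hrs1 : (m2:ℚ) * s1 - (n2:ℚ) * r1 = 1 := by
    have h2 : ((m2:ℤ) * s1 - n2 * r1 : ℤ) = 1 := by simpa using D.rs_det false 0 h0
    exact_mod_cast h2
  have hrs2 : (m1:ℚ) * s2 - (n1:ℚ) * r2 = 1 := by
    have h2 : ((m1:ℤ) * s2 - n1 * r2 : ℤ) = 1 := by
      have := D.rs_det true 0 h0
      simp only [Bool.not_true] at this
      rwa [hmt false, hnt false] at this
    exact_mod_cast h2
  -- leading exponents
  have hl1 : D.lam0 false 1 = (n1:ℚ) / m1 := by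
    rw [← D.base false false 1]; exact D.lead false false 0 h0
  have hl2 : D.lam0 true 1 = (n2:ℚ) / m2 := by
    rw [← D.base false true 1]; exact D.lead false true 0 h0
  rw [hmt true, ← hm2def, hb1e, hb2e, hl1, hl2] at hU'
  -- the entries of sw U'
  have e00 : sw U' 0 0 = (d:ℚ) * (1 - (n1:ℚ) * n2 * r1 * r2) / (m1 * m2) := by
    rw [hU']
    simp only [sw, Matrix.det_fin_two_of, Matrix.cons_val', Matrix.cons_val_zero,
      Matrix.empty_val', Matrix.cons_val_fin_one, Matrix.cons_val_one, Matrix.head_cons,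
      Matrix.head_fin_const, Matrix.of_apply]
    field_simp
  have e01 : sw U' 0 1 = (n1:ℚ) * r1 := by
    rw [hU']
    simp only [sw, Matrix.det_fin_two_of, Matrix.cons_val', Matrix.cons_val_zero,
      Matrix.empty_val', Matrix.cons_val_fin_one, Matrix.cons_val_one, Matrix.head_cons,
      Matrix.head_fin_const, Matrix.of_apply]
    field_simp
  have e10 : sw U' 1 0 = -((n2:ℚ) * r2) := by
    rw [hU']
    simp only [sw, Matrix.det_fin_two_of, Matrix.cons_val', Matrix.cons_val_zero,
      Matrix.empty_val', Matrix.cons_val_fin_one, Matrix.cons_val_one, Matrix.head_cons,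
      Matrix.head_fin_const, Matrix.of_apply]
    field_simp
  have e11 : sw U' 1 1 = (m1:ℚ) * m2 / d := by
    rw [hU']
    simp only [sw, Matrix.det_fin_two_of, Matrix.cons_val', Matrix.cons_val_zero,
      Matrix.empty_val', Matrix.cons_val_fin_one, Matrix.cons_val_one, Matrix.head_cons,
      Matrix.head_fin_const, Matrix.of_apply]
    field_simp
  -- key arithmetic identity from the Bezout relations
  have C : (1:ℚ) - (n1:ℚ) * n2 * r1 * r2 = (m2:ℚ) * s1 + m1 * s2 - m1 * m2 * s1 * s2 := by
    linear_combination ((m1:ℚ) * s2 - 1) * hrs1 + (n2:ℚ) * r1 * hrs2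
  refine ⟨e01, ?_, ?_, ?_, ?_, ?_⟩
  · rw [e10, hnt true]
  · rw [e11, hmt true]
  · -- integrality
    intro a b
    fin_cases a <;> fin_cases b <;> simp only [Fin.zero_eta, Fin.mk_one]
    · exact ⟨(b2:ℤ) * s1 + (b1:ℤ) * s2 - (d:ℤ) * s1 * s2, by
        rw [e00, C]
        push_cast
        rw [hb1e, hb2e]
        field_simp⟩
    · exact ⟨n1 * r1, by rw [e01]; push_cast; ring⟩
    · exact ⟨-(n2 * r2), by rw [e10]; push_cast; ring⟩
    · refine ⟨(Nat.gcd m1 m2 : ℤ), ?_⟩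
      rw [e11, div_eq_iff hdq]
      have := Nat.gcd_mul_lcm m1 m2
      rw [← hd_eq] at this
      exact_mod_cast this.symm
  · -- determinant
    rw [Matrix.det_fin_two, e00, e01, e10, e11]
    field_simp
    ring
  · -- the transformation of the derived exponents
    intro j hj1 hj2
    have h1e : 0 + 1 ≤ D.e - 1 := by omega
    have hA : D.lam true false 1 j
        = (m1:ℚ) * (D.lam0 false (j+1) - (n1:ℚ)/m1 + (d:ℚ) * ((n1:ℚ)/m1)) := by
      have h := D.rec_other true 0 j h1e hj1 hj2
      simp only [Bool.not_true, hmt, hnt, D.base, ← hm1def, ← hm2def, ← hd_eq] at h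
      rw [h, hl1]
    have hB : D.lam true true 1 j
        = (b2:ℚ) * (D.lam0 true (j+1) - (n2:ℚ)/m2 + (d:ℚ) * ((n2:ℚ)/m2))
          + (b2:ℚ) * r2 * ((n2:ℚ)/m2) * D.lam true false 1 j := by
      have h := D.rec_self true 0 j h1e hj1 hj2
      simp only [Bool.not_true, hmt, hnt, D.base, ← hm1def, ← hm2def, ← hd_eq,
        ← hb2nat] at h
      rw [h, hl2]
    have hA' : D.lam false true 1 j
        = (m2:ℚ) * (D.lam0 true (j+1) - (n2:ℚ)/m2 + (d:ℚ) * ((n2:ℚ)/m2)) := by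
      have h := D.rec_other false 0 j h1e hj1 hj2
      simp only [Bool.not_false, D.base, ← hm1def, ← hm2def, ← hd_eq] at h
      rw [h, hl2]
    have hB' : D.lam false false 1 j
        = (b1:ℚ) * (D.lam0 false (j+1) - (n1:ℚ)/m1 + (d:ℚ) * ((n1:ℚ)/m1))
          + (b1:ℚ) * r1 * ((n1:ℚ)/m1) * D.lam false true 1 j := by
      have h := D.rec_self false 0 j h1e hj1 hj2
      simp only [Bool.not_false, D.base, ← hm1def, ← hm2def, ← hd_eq, ← hb1nat] at h
      rw [h, hl1]
    constructor
    · rw [hB', hA', e00, e01, hA, hB, hA, hb1e, hb2e]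
      field_simp
      ring
    · rw [hA', e10, e11, hA, hB, hA, hb2e]
      field_simp
      ring
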